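/- Let n ≥ 3, 0 ≤ k ≤ n−2, and let d > 1 be a divisor of 2^(n−k) − 1. Set X := {2^n − 2^j : k ≤ j ≤ n}, m := (2^(n+1)+d) + (2^n − 2^k), Y := m − X, Z := {2^n + j·d : 1 ≤ j ≤ (2^n − 2^k)/d}, and A := X ∪ Y ∪ Z ∪ {2^n}. Then A is a normalised MSTD set with |A+A| = |A−A| + 1. -/
import Mathlib

open Finset Pointwise

/-- A finite set of integers is normalised if its smallest element is `0` and
the gcd of its elements is `1`. -/
def IsNormalised (A : Finset ℤ) : Prop :=
  0 ∈ A ∧ (∀ a ∈ A, 0 ≤ a) ∧ A.gcd id = 1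

lemma oddOfDvd {a b : ℤ} (hab : a ∣ b) (hb : Odd b) : Odd a := by
  rcases Int.even_or_odd a with he | ho
  · exfalso
    obtain ⟨c, rfl⟩ := hab
    exact (Int.not_odd_iff_even.mpr (he.mul_right c)) hb
  · exact ho

lemma oddDvdPowTwo {d : ℤ} (hodd : Odd d) {i : ℕ} (hdvd : d ∣ 2 ^ i) : IsUnit d := by
  have h2 : IsCoprime d 2 := by
    rw [Int.isCoprime_iff_gcd_eq_one, Int.gcd]
    exact Nat.coprime_two_right.mpr (Int.natAbs_odd.mpr hodd)
  exact (h2.pow_right (n := i)).isUnit_of_dvd' dvd_rfl hdvd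

/-- Theorem 2: for `n ≥ 3`, `0 ≤ k ≤ n−2` and `d > 1` a divisor of `2^(n−k) − 1`,
the set `A = X ∪ (m − X) ∪ Z ∪ {2^n}` is a normalised MSTD set with
`|A+A| = |A−A| + 1`. -/
theorem thm2 (n k : ℕ) (hn : 3 ≤ n) (hk : k + 2 ≤ n)
    (d : ℤ) (hd : 1 < d) (hdvd : d ∣ 2 ^ (n - k) - 1)
    (X Y Z A : Finset ℤ) (m : ℤ)
    (hX : X = (Finset.Icc k n).image (fun j => (2 : ℤ) ^ n - 2 ^ j))
    (hm : m = (2 ^ (n + 1) + d) + (2 ^ n - 2 ^ k))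
    (hY : Y = X.image (fun x => m - x))
    (hZ : Z = (Finset.Icc (1 : ℤ) ((2 ^ n - 2 ^ k) / d)).image
      (fun j => 2 ^ n + j * d))
    (hA : A = X ∪ Y ∪ Z ∪ {2 ^ n}) :
    IsNormalised A ∧ (A + A).card = (A - A).card + 1 := by
  -- ## Basic numeric facts
  have hd0 : (0:ℤ) < d := by linarith
  have hK1 : (1:ℤ) ≤ 2 ^ k := one_le_pow₀ (by norm_num)
  have hN4 : 4 * (2:ℤ) ^ k ≤ 2 ^ n := by
    have h1 : (2:ℤ) ^ (k + 2) ≤ 2 ^ n := pow_le_pow_right₀ (by norm_num) hk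
    have h2 : (2:ℤ) ^ (k + 2) = 4 * 2 ^ k := by ring
    linarith
  have hodd : Odd d := by
    refine oddOfDvd hdvd (Even.sub_odd ?_ odd_one)
    refine ⟨2 ^ (n - k - 1), ?_⟩
    have h1 : (2:ℤ) ^ (n - k) = 2 ^ (n - k - 1) * 2 := by
      rw [← pow_succ]; congr 1; omega
    rw [h1]; ring
  have hsd : d ∣ (2:ℤ) ^ n - 2 ^ k := by
    have h1 : (2:ℤ) ^ n - 2 ^ k = 2 ^ k * (2 ^ (n - k) - 1) := by
      have h2 : (2:ℤ) ^ n = 2 ^ k * 2 ^ (n - k) := by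
        rw [← pow_add]; congr 1; omega
      rw [h2]; ring
    rw [h1]
    exact Dvd.dvd.mul_left hdvd _
  obtain ⟨t, ht⟩ : ∃ t : ℤ, (2:ℤ) ^ n - 2 ^ k = d * t := hsd
  have hds : d ≤ (2:ℤ) ^ n - 2 ^ k := by
    refine Int.le_of_dvd ?_ ⟨t, ht⟩
    linarith
  have ht1 : 1 ≤ t := by
    by_contra hcon
    push_neg at hcon
    have h1 : t ≤ 0 := by omega
    have h2 : d * t ≤ 0 := mul_nonpos_of_nonneg_of_nonpos hd0.le h1
    linarith
  have hdiv : ((2:ℤ) ^ n - 2 ^ k) / d = t := by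
    rw [ht]
    exact Int.mul_ediv_cancel_left _ (by omega)
  obtain ⟨b, hbdef⟩ : ∃ b : ℤ, b = 2 * (2:ℤ) ^ n - 2 ^ k + d := ⟨_, rfl⟩
  have hmb : m = b + 2 ^ n := by rw [hm, hbdef]; ring
  -- bounds for powers
  have hpows : ∀ j : ℕ, k ≤ j → j ≤ n →
      (1:ℤ) ≤ 2 ^ j ∧ (2:ℤ) ^ k ≤ 2 ^ j ∧ (2:ℤ) ^ j ≤ 2 ^ n := fun j h1 h2 =>
    ⟨one_le_pow₀ (by norm_num), pow_le_pow_right₀ (by norm_num) h1,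
      pow_le_pow_right₀ (by norm_num) h2⟩
  have hzbd : ∀ i : ℤ, 1 ≤ i → i ≤ t → d ≤ i * d ∧ i * d ≤ (2:ℤ) ^ n - 2 ^ k := by
    intro i h1 h2
    constructor
    · nlinarith
    · nlinarith
  -- ## Membership lemmas
  have hXA : ∀ j : ℕ, k ≤ j → j ≤ n → (2:ℤ) ^ n - 2 ^ j ∈ A := by
    intro j h1 h2
    rw [hA]
    refine Finset.mem_union_left _ (Finset.mem_union_left _ (Finset.mem_union_left _ ?_))
    rw [hX, Finset.mem_image]
    exact ⟨j, Finset.mem_Icc.mpr ⟨h1, h2⟩, rfl⟩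
  have hYA : ∀ j : ℕ, k ≤ j → j ≤ n → b + (2:ℤ) ^ j ∈ A := by
    intro j h1 h2
    rw [hA]
    refine Finset.mem_union_left _ (Finset.mem_union_left _ (Finset.mem_union_right _ ?_))
    rw [hY, Finset.mem_image]
    refine ⟨2 ^ n - 2 ^ j, ?_, by rw [hmb]; ring⟩
    rw [hX, Finset.mem_image]
    exact ⟨j, Finset.mem_Icc.mpr ⟨h1, h2⟩, rfl⟩
  have hZA : ∀ i : ℤ, 1 ≤ i → i ≤ t → (2:ℤ) ^ n + i * d ∈ A := by
    intro i h1 h2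
    rw [hA]
    refine Finset.mem_union_left _ (Finset.mem_union_right _ ?_)
    rw [hZ, hdiv, Finset.mem_image]
    exact ⟨i, Finset.mem_Icc.mpr ⟨h1, h2⟩, rfl⟩
  have hNA : (2:ℤ) ^ n ∈ A := by
    rw [hA]
    exact Finset.mem_union_right _ (Finset.mem_singleton_self _)
  have h0A : (0:ℤ) ∈ A := by
    have := hXA n (by omega) le_rfl
    simpa using this
  have hcases : ∀ a ∈ A,
      (∃ j : ℕ, k ≤ j ∧ j ≤ n ∧ a = 2 ^ n - 2 ^ j) ∨
      (∃ j : ℕ, k ≤ j ∧ j ≤ n ∧ a = b + 2 ^ j) ∨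
      (∃ i : ℤ, 1 ≤ i ∧ i ≤ t ∧ a = 2 ^ n + i * d) ∨ a = 2 ^ n := by
    intro a ha
    rw [hA] at ha
    simp only [Finset.mem_union, Finset.mem_singleton] at ha
    rcases ha with ((hx | hy) | hz) | hw
    · left
      rw [hX, Finset.mem_image] at hx
      obtain ⟨j, hj, he⟩ := hx
      rw [Finset.mem_Icc] at hj
      exact ⟨j, hj.1, hj.2, he.symm⟩
    · right; left
      rw [hY, Finset.mem_image] at hy
      obtain ⟨x, hx, he⟩ := hy
      rw [hX, Finset.mem_image] at hx
      obtain ⟨j, hj, he2⟩ := hx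
      rw [Finset.mem_Icc] at hj
      refine ⟨j, hj.1, hj.2, ?_⟩
      rw [← he, ← he2, hmb]; ring
    · right; right; left
      rw [hZ, hdiv, Finset.mem_image] at hz
      obtain ⟨i, hi, he⟩ := hz
      rw [Finset.mem_Icc] at hi
      exact ⟨i, hi.1, hi.2, he.symm⟩
    · right; right; right; exact hw
  -- ## Part 1 : IsNormalised
  have hnorm : IsNormalised A := by
    refine ⟨h0A, ?_, ?_⟩
    · intro a ha
      rcases hcases a ha with ⟨j, h1, h2, rfl⟩ | ⟨j, h1, h2, rfl⟩ | ⟨i, h1, h2, rfl⟩ | rfl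
      · obtain ⟨p1, p2, p3⟩ := hpows j h1 h2; linarith
      · obtain ⟨p1, p2, p3⟩ := hpows j h1 h2; linarith [hbdef]
      · obtain ⟨q1, q2⟩ := hzbd i h1 h2; linarith
      · linarith
    · have hg1 : A.gcd id ∣ (2:ℤ) ^ n := Finset.gcd_dvd hNA
      have hg2 : A.gcd id ∣ (2:ℤ) ^ n + 1 * d := Finset.gcd_dvd (hZA 1 le_rfl ht1)
      have hgd : A.gcd id ∣ d := by
        have h3 := dvd_sub hg2 hg1
        have e : (2:ℤ) ^ n + 1 * d - 2 ^ n = d := by ring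
        rwa [e] at h3
      have hgodd : Odd (A.gcd id) := oddOfDvd hgd hodd
      have hunit : IsUnit (A.gcd id) := oddDvdPowTwo hgodd hg1
      rw [← Finset.normalize_gcd]
      exact normalize_eq_one.mpr hunit
  -- ## sums and differences involving b
  have hAAneg : ∀ w ∈ A - A, -w ∈ A - A := by
    intro w hw
    rw [Finset.mem_sub] at hw ⊢
    obtain ⟨p, hp, q, hq, rfl⟩ := hw
    exact ⟨q, hq, p, hp, by ring⟩
  have hdiff : ∀ a ∈ A, a ≠ (2:ℤ) ^ n → b - a ∈ A - A := by
    intro a ha hne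
    rcases hcases a ha with ⟨j, h1, h2, rfl⟩ | ⟨j, h1, h2, rfl⟩ | ⟨i, h1, h2, rfl⟩ | rfl
    · have e : b - ((2:ℤ) ^ n - 2 ^ j) = (b + 2 ^ j) - 2 ^ n := by ring
      rw [e]
      exact Finset.sub_mem_sub (hYA j h1 h2) hNA
    · rcases Nat.lt_or_ge j n with hj | hj
      · have e : b - (b + (2:ℤ) ^ j) = (2 ^ n - 2 ^ (j + 1)) - (2 ^ n - 2 ^ j) := by
          rw [pow_succ]; ring
        rw [e]
        exact Finset.sub_mem_sub (hXA (j + 1) (by omega) (by omega)) (hXA j h1 h2)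
      · have hjn : j = n := le_antisymm h2 hj
        rw [hjn]
        have e : b - (b + (2:ℤ) ^ n) = (2 ^ n - 2 ^ k) - (2 ^ n + t * d) := by
          linarith [hbdef, ht, hmb]
        rw [e]
        exact Finset.sub_mem_sub (hXA k le_rfl (by omega)) (hZA t ht1 le_rfl)
    · rcases eq_or_lt_of_le h1 with h1' | h1'
      · have e : b - ((2:ℤ) ^ n + i * d) = (2 ^ n + t * d) - 2 ^ n := by
          rw [← h1']
          linarith [hbdef, ht, hmb]
        rw [e]
        exact Finset.sub_mem_sub (hZA t ht1 le_rfl) hNA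
      · have e : b - ((2:ℤ) ^ n + i * d) = (2 ^ n + t * d) - (2 ^ n + (i - 1) * d) := by
          linarith [hbdef, ht, hmb]
        rw [e]
        exact Finset.sub_mem_sub (hZA t ht1 le_rfl) (hZA (i - 1) (by omega) (by omega))
    · exact absurd rfl hne
  have hsum : ∀ a ∈ A, b + a ∈ A + A := by
    intro a ha
    rcases hcases a ha with ⟨j, h1, h2, rfl⟩ | ⟨j, h1, h2, rfl⟩ | ⟨i, h1, h2, rfl⟩ | rfl
    · rcases Nat.lt_or_ge j n with hj | hj
      · have e : b + ((2:ℤ) ^ n - 2 ^ j) = (b + 2 ^ j) + (2 ^ n - 2 ^ (j + 1)) := by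
          rw [pow_succ]; ring
        rw [e]
        exact Finset.add_mem_add (hYA j h1 h2) (hXA (j + 1) (by omega) (by omega))
      · have hjn : j = n := le_antisymm h2 hj
        rw [hjn]
        have e : b + ((2:ℤ) ^ n - 2 ^ n) = (2 ^ n + 1 * d) + (2 ^ n - 2 ^ k) := by
          linarith [hbdef, ht, hmb]
        rw [e]
        exact Finset.add_mem_add (hZA 1 le_rfl ht1) (hXA k le_rfl (by omega))
    · rcases Nat.lt_or_ge k j with hj | hj
      · have hp : (2:ℤ) ^ j = 2 ^ (j - 1) + 2 ^ (j - 1) := by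
          have h3 : (2:ℤ) ^ j = 2 ^ (j - 1) * 2 := by
            rw [← pow_succ]; congr 1; omega
          rw [h3]; ring
        have e : b + (b + (2:ℤ) ^ j) = (b + 2 ^ (j - 1)) + (b + 2 ^ (j - 1)) := by
          linarith [hbdef, ht, hmb]
        rw [e]
        exact Finset.add_mem_add (hYA (j - 1) (by omega) (by omega))
          (hYA (j - 1) (by omega) (by omega))
      · have hjk : j = k := le_antisymm hj h1
        rw [hjk]
        have e : b + (b + (2:ℤ) ^ k) = (b + 2 ^ n) + (2 ^ n + 1 * d) := by
          linarith [hbdef, ht, hmb]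
        rw [e]
        exact Finset.add_mem_add (hYA n (by omega) le_rfl) (hZA 1 le_rfl ht1)
    · rcases eq_or_lt_of_le h2 with h2' | h2'
      · have e : b + ((2:ℤ) ^ n + i * d) = (2 ^ n - 2 ^ k) + (b + 2 ^ n) := by
          rw [h2']
          linarith [hbdef, ht, hmb]
        rw [e]
        exact Finset.add_mem_add (hXA k le_rfl (by omega)) (hYA n (by omega) le_rfl)
      · have e : b + ((2:ℤ) ^ n + i * d) = (2 ^ n + t * d) + (2 ^ n + (i + 1) * d) := by
          linarith [hbdef, ht, hmb]
        rw [e]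
        exact Finset.add_mem_add (hZA t ht1 le_rfl) (hZA (i + 1) (by omega) (by omega))
    · have e : b + (2:ℤ) ^ n = (b + 2 ^ n) + (2 ^ n - 2 ^ n) := by ring
      rw [e]
      exact Finset.add_mem_add (hYA n (by omega) le_rfl) (hXA n (by omega) le_rfl)
  -- ## the two non-membership facts
  have hdcontra : ∀ j : ℕ, d ∣ (2:ℤ) ^ j → False := by
    intro j hdd
    have := oddDvdPowTwo hodd hdd
    rw [Int.isUnit_iff] at this
    omega
  have hnd : b - (2:ℤ) ^ n ∉ A - A := by
    intro hmem
    rw [Finset.mem_sub] at hmem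
    obtain ⟨p, hp, q, hq, he⟩ := hmem
    rcases hcases p hp with ⟨α, ha1, ha2, rfl⟩ | ⟨α, ha1, ha2, rfl⟩ | ⟨i, hi1, hi2, rfl⟩ | rfl <;>
      rcases hcases q hq with ⟨β, hb1, hb2, rfl⟩ | ⟨β, hb1, hb2, rfl⟩ | ⟨l, hl1, hl2, rfl⟩ | rfl
    · obtain ⟨p1, p2, p3⟩ := hpows α ha1 ha2
      obtain ⟨q1, q2, q3⟩ := hpows β hb1 hb2
      linarith [hbdef]
    · obtain ⟨p1, p2, p3⟩ := hpows α ha1 ha2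
      obtain ⟨q1, q2, q3⟩ := hpows β hb1 hb2
      linarith [hbdef]
    · obtain ⟨p1, p2, p3⟩ := hpows α ha1 ha2
      obtain ⟨q1, q2⟩ := hzbd l hl1 hl2
      linarith [hbdef]
    · obtain ⟨p1, p2, p3⟩ := hpows α ha1 ha2
      linarith [hbdef]
    · obtain ⟨p1, p2, p3⟩ := hpows α ha1 ha2
      obtain ⟨q1, q2, q3⟩ := hpows β hb1 hb2
      linarith [hbdef]
    · obtain ⟨p1, p2, p3⟩ := hpows α ha1 ha2
      obtain ⟨q1, q2, q3⟩ := hpows β hb1 hb2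
      linarith [hbdef]
    · -- Y - Z : divisibility
      refine hdcontra α ⟨l, ?_⟩
      linarith [hbdef, ht, he]
    · obtain ⟨p1, p2, p3⟩ := hpows α ha1 ha2
      linarith [hbdef]
    · -- Z - X : divisibility
      refine hdcontra β ⟨t + 1 - i, ?_⟩
      linarith [hbdef, ht, he]
    · obtain ⟨p1, p2⟩ := hzbd i hi1 hi2
      obtain ⟨q1, q2, q3⟩ := hpows β hb1 hb2
      linarith [hbdef]
    · obtain ⟨p1, p2⟩ := hzbd i hi1 hi2
      obtain ⟨q1, q2⟩ := hzbd l hl1 hl2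
      linarith [hbdef]
    · obtain ⟨p1, p2⟩ := hzbd i hi1 hi2
      linarith [hbdef]
    · -- N - X : divisibility
      refine hdcontra β ⟨t + 1, ?_⟩
      linarith [hbdef, ht, he]
    · obtain ⟨q1, q2, q3⟩ := hpows β hb1 hb2
      linarith [hbdef]
    · obtain ⟨q1, q2⟩ := hzbd l hl1 hl2
      linarith [hbdef]
    · linarith [hbdef]
  have hnd' : (2:ℤ) ^ n - b ∉ A - A := by
    intro hmem
    have h2 := hAAneg _ hmem
    rw [neg_sub] at h2
    exact hnd h2
  have hns : b + b ∉ A + A := by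
    intro hmem
    rw [Finset.mem_add] at hmem
    obtain ⟨p, hp, q, hq, he⟩ := hmem
    rcases hcases p hp with ⟨α, ha1, ha2, rfl⟩ | ⟨α, ha1, ha2, rfl⟩ | ⟨i, hi1, hi2, rfl⟩ | rfl <;>
      rcases hcases q hq with ⟨β, hb1, hb2, rfl⟩ | ⟨β, hb1, hb2, rfl⟩ | ⟨l, hl1, hl2, rfl⟩ | rfl
    · obtain ⟨p1, p2, p3⟩ := hpows α ha1 ha2
      obtain ⟨q1, q2, q3⟩ := hpows β hb1 hb2
      linarith [hbdef]
    · obtain ⟨p1, p2, p3⟩ := hpows α ha1 ha2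
      obtain ⟨q1, q2, q3⟩ := hpows β hb1 hb2
      linarith [hbdef]
    · obtain ⟨p1, p2, p3⟩ := hpows α ha1 ha2
      obtain ⟨q1, q2⟩ := hzbd l hl1 hl2
      linarith [hbdef]
    · obtain ⟨p1, p2, p3⟩ := hpows α ha1 ha2
      linarith [hbdef]
    · obtain ⟨p1, p2, p3⟩ := hpows α ha1 ha2
      obtain ⟨q1, q2, q3⟩ := hpows β hb1 hb2
      linarith [hbdef]
    · obtain ⟨p1, p2, p3⟩ := hpows α ha1 ha2
      obtain ⟨q1, q2, q3⟩ := hpows β hb1 hb2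
      linarith [hbdef]
    · -- Y + Z : divisibility
      refine hdcontra α ⟨t + 1 - l, ?_⟩
      linarith [hbdef, ht, he]
    · -- Y + N : divisibility
      refine hdcontra α ⟨t + 1, ?_⟩
      linarith [hbdef, ht, he]
    · obtain ⟨p1, p2⟩ := hzbd i hi1 hi2
      obtain ⟨q1, q2, q3⟩ := hpows β hb1 hb2
      linarith [hbdef]
    · -- Z + Y : divisibility
      refine hdcontra β ⟨t + 1 - i, ?_⟩
      linarith [hbdef, ht, he]
    · obtain ⟨p1, p2⟩ := hzbd i hi1 hi2
      obtain ⟨q1, q2⟩ := hzbd l hl1 hl2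
      linarith [hbdef]
    · obtain ⟨p1, p2⟩ := hzbd i hi1 hi2
      linarith [hbdef]
    · obtain ⟨q1, q2, q3⟩ := hpows β hb1 hb2
      linarith [hbdef]
    · -- N + Y : divisibility
      refine hdcontra β ⟨t + 1, ?_⟩
      linarith [hbdef, ht, he]
    · obtain ⟨q1, q2⟩ := hzbd l hl1 hl2
      linarith [hbdef]
    · linarith [hbdef]
  -- ## the symmetric set B
  set B : Finset ℤ := insert b A with hB
  have hBsym : ∀ x ∈ B, m - x ∈ B := by
    intro x hx
    rw [hB, Finset.mem_insert] at hx ⊢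
    rcases hx with hxb | hx
    · right
      rw [hxb]
      have e : m - b = (2:ℤ) ^ n := by linarith [hmb]
      rw [e]; exact hNA
    rcases hcases x hx with ⟨j, h1, h2, rfl⟩ | ⟨j, h1, h2, rfl⟩ | ⟨i, h1, h2, rfl⟩ | rfl
    · right
      have e : m - ((2:ℤ) ^ n - 2 ^ j) = b + 2 ^ j := by rw [hmb]; ring
      rw [e]; exact hYA j h1 h2
    · right
      have e : m - (b + (2:ℤ) ^ j) = 2 ^ n - 2 ^ j := by rw [hmb]; ring
      rw [e]; exact hXA j h1 h2
    · right
      have e : m - ((2:ℤ) ^ n + i * d) = 2 ^ n + (t + 1 - i) * d := by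
        linarith [hbdef, ht, hmb]
      rw [e]; exact hZA (t + 1 - i) (by omega) (by omega)
    · left
      linarith [hmb]
  have hL1 : (B + B) = (B - B).image (fun x => m + x) := by
    ext w
    simp only [Finset.mem_add, Finset.mem_sub, Finset.mem_image]
    constructor
    · rintro ⟨p, hp, q, hq, rfl⟩
      exact ⟨p - (m - q), ⟨p, hp, m - q, hBsym q hq, rfl⟩, by ring⟩
    · rintro ⟨x, ⟨p, hp, q, hq, rfl⟩, rfl⟩
      exact ⟨p, hp, m - q, hBsym q hq, by ring⟩
  have hL3 : B + B = insert (b + b) (A + A) := by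
    apply Finset.Subset.antisymm
    · intro w hw
      rw [Finset.mem_add] at hw
      obtain ⟨p, hp, q, hq, rfl⟩ := hw
      rw [hB, Finset.mem_insert] at hp hq
      rcases hp with hp1 | hp1
      · rcases hq with hq1 | hq1
        · rw [hp1, hq1]
          exact Finset.mem_insert_self _ _
        · rw [hp1]
          exact Finset.mem_insert_of_mem (hsum q hq1)
      · rcases hq with hq1 | hq1
        · rw [hq1, add_comm p b]
          exact Finset.mem_insert_of_mem (hsum p hp1)
        · exact Finset.mem_insert_of_mem (Finset.add_mem_add hp1 hq1)
    · intro w hw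
      rw [Finset.mem_insert] at hw
      rcases hw with rfl | hw
      · exact Finset.add_mem_add (Finset.mem_insert_self _ _) (Finset.mem_insert_self _ _)
      · exact Finset.add_subset_add (Finset.subset_insert _ _) (Finset.subset_insert _ _) hw
  have hL2 : B - B = insert (b - 2 ^ n) (insert ((2:ℤ) ^ n - b) (A - A)) := by
    apply Finset.Subset.antisymm
    · intro w hw
      rw [Finset.mem_sub] at hw
      obtain ⟨p, hp, q, hq, rfl⟩ := hw
      rw [hB, Finset.mem_insert] at hp hq
      simp only [Finset.mem_insert]
      rcases hp with hp1 | hp1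
      · rcases hq with hq1 | hq1
        · right; right
          rw [hp1, hq1]
          have e : b - b = (0:ℤ) - 0 := by ring
          rw [e]
          exact Finset.sub_mem_sub h0A h0A
        · rw [hp1]
          by_cases hqN : q = (2:ℤ) ^ n
          · left; rw [hqN]
          · right; right; exact hdiff q hq1 hqN
      · rcases hq with hq1 | hq1
        · rw [hq1]
          by_cases hpN : p = (2:ℤ) ^ n
          · right; left; rw [hpN]
          · right; right
            have h2 := hAAneg _ (hdiff p hp1 hpN)
            rwa [neg_sub] at h2
        · right; right; exact Finset.sub_mem_sub hp1 hq1
    · intro w hw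
      simp only [Finset.mem_insert] at hw
      rcases hw with rfl | rfl | hw
      · exact Finset.sub_mem_sub (Finset.mem_insert_self _ _) (Finset.mem_insert_of_mem hNA)
      · exact Finset.sub_mem_sub (Finset.mem_insert_of_mem hNA) (Finset.mem_insert_self _ _)
      · rw [Finset.mem_sub] at hw ⊢
        obtain ⟨p, hp, q, hq, rfl⟩ := hw
        exact ⟨p, Finset.mem_insert_of_mem hp, q, Finset.mem_insert_of_mem hq, rfl⟩
  -- ## counting
  have c1 : (B + B).card = (B - B).card := by
    rw [hL1]
    exact Finset.card_image_of_injective _ (add_right_injective m)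
  have c3 : (B + B).card = (A + A).card + 1 := by
    rw [hL3, Finset.card_insert_of_notMem hns]
  have hne1 : b - (2:ℤ) ^ n ∉ insert ((2:ℤ) ^ n - b) (A - A) := by
    simp only [Finset.mem_insert]
    push_neg
    constructor
    · intro hcon
      linarith [hbdef]
    · exact hnd
  have c2 : (B - B).card = (A - A).card + 2 := by
    rw [hL2, Finset.card_insert_of_notMem hne1, Finset.card_insert_of_notMem hnd']
  exact ⟨hnorm, by omega⟩
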